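/- For every n ≥ 7 with n ≡ 3 (mod 4), the decycling number of the cube of the n-cycle equals (n+3)/2: ∇(Cₙ³) = (n+3)/2. -/

import Mathlib

open SimpleGraph

/-- `S` is a decycling set of `G` if the subgraph of `G` induced on the complement of `S`
is acyclic. -/
def SimpleGraph.IsDecyclingSet {V : Type*} (G : SimpleGraph V) (S : Set V) : Prop :=
  (G.induce Sᶜ).IsAcyclic

/-- The decycling number `∇(G)` of `G`: the minimum cardinality of a decycling set of `G`. -/
noncomputable def SimpleGraph.decyclingNumber {V : Type*} (G : SimpleGraph V) : ℕ :=
  sInf {k | ∃ S : Set V, G.IsDecyclingSet S ∧ S.ncard = k}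

/-- The cube `Cₙ³` of the `n`-cycle: vertex set `ZMod n`, with `i` adjacent to `j` iff
`i ≠ j` and `i - j ≡ ±1`, `±2`, or `±3 (mod n)`. -/
def cycleCube (n : ℕ) : SimpleGraph (ZMod n) where
  Adj i j := i ≠ j ∧ (i - j = 1 ∨ j - i = 1 ∨ i - j = 2 ∨ j - i = 2 ∨ i - j = 3 ∨ j - i = 3)
  symm := ⟨by intro i j ⟨h, hd⟩; exact ⟨h.symm, by tauto⟩⟩
  loopless := ⟨by intro i ⟨h, _⟩; exact h rfl⟩


lemma not_isAcyclic_of_triangle {V : Type*} {G : SimpleGraph V} {u v w : V}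
    (huv : G.Adj u v) (hvw : G.Adj v w) (hwu : G.Adj w u) : ¬ G.IsAcyclic := by
  intro hG
  have hne1 := huv.ne
  have hne2 := hvw.ne
  have hne3 := hwu.ne
  apply hG (Walk.cons huv (Walk.cons hvw (Walk.cons hwu Walk.nil)))
  simp [Walk.isCycle_def, Walk.isTrail_def, Sym2.eq, Sym2.rel_iff', hne1, hne2, hne3,
    Ne.symm hne1, Ne.symm hne2, Ne.symm hne3]
  try tauto

lemma isAcyclic_of_grad {V : Type*} {G : SimpleGraph V} (φ : V → ℕ)
    (hinj : Function.Injective φ)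
    (hedge : ∀ u v, G.Adj u v → φ u = φ v + 1 ∨ φ v = φ u + 1) : G.IsAcyclic := by
  intro v c hc
  classical
  obtain ⟨u, hu, hmax⟩ : ∃ u ∈ c.support, ∀ w ∈ c.support, φ w ≤ φ u := by
    obtain ⟨u, hu, h⟩ := c.support.toFinset.exists_max_image φ ⟨v, by simp⟩
    exact ⟨u, by simpa using hu, fun w hw => h w (by simpa using hw)⟩
  have hdc : (c.rotate u hu).IsCycle := hc.rotate hu
  have hmem : ∀ x, x ∈ (c.rotate u hu).support → x ∈ c.support := by
    intro x hx
    rw [Walk.support_eq_cons] at hx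
    rcases List.mem_cons.mp hx with h | h
    · exact h ▸ hu
    · exact List.mem_of_mem_tail ((Walk.support_rotate c u hu).mem_iff.mp h)
  obtain ⟨x, hadj, q, hq⟩ := Walk.not_nil_iff.mp hdc.not_nil
  rw [hq] at hdc hmem
  obtain ⟨hqpath, hed⟩ := (Walk.cons_isCycle_iff q hadj).mp hdc
  have hlen : 2 ≤ q.length := by
    have := hdc.three_le_length
    simpa using this
  have hdne : q.darts ≠ [] := by
    rw [← List.length_pos_iff] at *
    rw [Walk.length_darts]; omega
  set D := q.darts.getLast hdne with hD
  have hsnd : D.snd = u := by rw [hD, Walk.getLast_darts_eq_lastDart]; rfl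
  have hDmem : D ∈ q.darts := List.getLast_mem hdne
  have hadj2 : G.Adj D.fst u := hsnd ▸ D.adj
  have hne : D.fst ≠ x := by
    intro h
    apply hed
    have hDe : D.edge ∈ q.edges := List.mem_map_of_mem (f := Dart.edge) hDmem
    have he : D.edge = s(x, u) := by
      rw [Dart.edge, show D.toProd = (x, u) from Prod.ext h hsnd]
    rwa [he, Sym2.eq_swap] at hDe
  have hx_mem : x ∈ c.support := hmem x (by simp)
  have hD_mem : D.fst ∈ c.support :=
    hmem _ (Walk.dart_fst_mem_support_of_mem_darts _ (by simp [hDmem]))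
  have h1 := hedge u x hadj
  have h2 := hedge D.fst u hadj2
  have m1 := hmax x hx_mem
  have m2 := hmax D.fst hD_mem
  have : φ x = φ D.fst := by omega
  exact hne (hinj this).symm

lemma sub_val {n : ℕ} [NeZero n] (hn7 : 7 ≤ n) {x y : ZMod n} {c : ℕ} (hc : 0 < c)
    (h3 : c ≤ 3) (h : x - y = (c : ZMod n)) : x.val = y.val + c ∨ x.val + n = y.val + c := by
  have hx : x = y + (c : ZMod n) := by rw [← h]; ring
  have hcv : ((c : ZMod n)).val = c := ZMod.val_cast_of_lt (by omega)
  have hv : x.val = (y.val + c) % n := by rw [hx, ZMod.val_add, hcv]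
  have hy : y.val < n := ZMod.val_lt y
  rcases Nat.lt_or_ge (y.val + c) n with h' | h'
  · left; rw [hv, Nat.mod_eq_of_lt h']
  · right
    rw [hv, Nat.mod_eq_sub_mod h', Nat.mod_eq_of_lt (by omega)]
    omega

lemma adj_val {n : ℕ} [NeZero n] (hn7 : 7 ≤ n) {x y : ZMod n} (h : (cycleCube n).Adj x y) :
    ∃ c, 1 ≤ c ∧ c ≤ 3 ∧ (x.val = y.val + c ∨ y.val = x.val + c ∨
      x.val + n = y.val + c ∨ y.val + n = x.val + c) := by
  obtain ⟨-, hd⟩ := h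
  have e1 : (1 : ZMod n) = ((1 : ℕ) : ZMod n) := by push_cast; ring
  have e2 : (2 : ZMod n) = ((2 : ℕ) : ZMod n) := by push_cast; ring
  have e3 : (3 : ZMod n) = ((3 : ℕ) : ZMod n) := by push_cast; ring
  rcases hd with h | h | h | h | h | h
  · exact ⟨1, by omega, by omega, by rcases sub_val hn7 one_pos (by omega) (e1 ▸ h) with h'|h' <;> omega⟩
  · exact ⟨1, by omega, by omega, by rcases sub_val hn7 one_pos (by omega) (e1 ▸ h) with h'|h' <;> omega⟩
  · exact ⟨2, by omega, by omega, by rcases sub_val hn7 (by omega) (by omega) (e2 ▸ h) with h'|h' <;> omega⟩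
  · exact ⟨2, by omega, by omega, by rcases sub_val hn7 (by omega) (by omega) (e2 ▸ h) with h'|h' <;> omega⟩
  · exact ⟨3, by omega, by omega, by rcases sub_val hn7 (by omega) (by omega) (e3 ▸ h) with h'|h' <;> omega⟩
  · exact ⟨3, by omega, by omega, by rcases sub_val hn7 (by omega) (by omega) (e3 ▸ h) with h'|h' <;> omega⟩

lemma adj_of_gap {n : ℕ} [NeZero n] (hn7 : 7 ≤ n) (x : ZMod n) (c : ℕ) (h1 : 1 ≤ c)
    (h3 : c ≤ 3) : (cycleCube n).Adj x (x + (c : ℕ)) := by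
  have hcv : ((c : ZMod n)).val = c := ZMod.val_cast_of_lt (by omega)
  have hne : ((c : ℕ) : ZMod n) ≠ 0 := by
    intro h0; rw [h0] at hcv; simp [ZMod.val_zero] at hcv; omega
  constructor
  · intro he
    apply hne
    have : x + (c:ℕ) - x = 0 := by rw [← he]; ring
    rwa [add_sub_cancel_left] at this
  · have key : x + (c:ℕ) - x = ((c:ℕ) : ZMod n) := by ring
    interval_cases c
    · right; left; rw [key]; push_cast; ring
    · right; right; right; left; rw [key]; push_cast; ring
    · right; right; right; right; right; rw [key]; push_cast; ring

lemma card_K (n m : ℕ) (hm : 1 ≤ m) (hn : n = 4*m+3) :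
    haveI : NeZero n := ⟨by omega⟩
    ({x : ZMod n | x.val < 4*m ∧ x.val % 4 < 2} : Set (ZMod n)).ncard = 2*m := by
  haveI : NeZero n := ⟨by omega⟩
  classical
  rw [Set.ncard_eq_toFinset_card']
  rw [Set.toFinset_setOf]
  rw [show 2*m = (Finset.range (2*m)).card from (Finset.card_range _).symm]
  refine Finset.card_bij' (fun (x : ZMod n) (_ : x ∈ Finset.filter (fun x : ZMod n => x.val < 4*m ∧ x.val % 4 < 2) Finset.univ) => 2*(x.val/4) + x.val%4)
      (fun (i : ℕ) (_ : i ∈ Finset.range (2*m)) => ((4*(i/2) + i%2 : ℕ) : ZMod n)) ?_ ?_ ?_ ?_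
  · intro a ha
    simp only [Finset.mem_filter, Finset.mem_univ, true_and] at ha
    simp only [Finset.mem_range]
    omega
  · intro i hi
    simp only [Finset.mem_range] at hi
    have hlt : 4*(i/2) + i%2 < n := by omega
    simp only [Finset.mem_filter, Finset.mem_univ, true_and]
    rw [ZMod.val_cast_of_lt hlt]
    omega
  · intro a ha
    simp only [Finset.mem_filter, Finset.mem_univ, true_and] at ha
    show ((4*((2*(a.val/4) + a.val%4)/2) + (2*(a.val/4) + a.val%4)%2 : ℕ) : ZMod n) = a
    have : 4*((2*(a.val/4) + a.val%4)/2) + (2*(a.val/4) + a.val%4)%2 = a.val := by omega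
    rw [this]
    exact ZMod.natCast_rightInverse a
  · intro i hi
    simp only [Finset.mem_range] at hi
    have hlt : 4*(i/2) + i%2 < n := by omega
    show 2*(((4*(i/2) + i%2 : ℕ) : ZMod n).val/4) + ((4*(i/2) + i%2 : ℕ) : ZMod n).val%4 = i
    rw [ZMod.val_cast_of_lt hlt]
    omega

lemma upper (n m : ℕ) (hm : 1 ≤ m) (hn : n = 4*m+3) :
    ∃ S : Set (ZMod n), (cycleCube n).IsDecyclingSet S ∧ S.ncard = 2*m+3 := by
  haveI : NeZero n := ⟨by omega⟩
  classical
  set K : Set (ZMod n) := {x : ZMod n | x.val < 4*m ∧ x.val % 4 < 2} with hK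
  refine ⟨Kᶜ, ?_, ?_⟩
  · unfold SimpleGraph.IsDecyclingSet
    rw [compl_compl]
    apply isAcyclic_of_grad (fun x : ↥K => 2*(x.1.val/4) + x.1.val%4)
    · intro a b h
      have ha := a.2
      have hb := b.2
      simp only [hK, Set.mem_setOf_eq] at ha hb
      have h' : 2*(a.1.val/4) + a.1.val%4 = 2*(b.1.val/4) + b.1.val%4 := h
      have : a.1.val = b.1.val := by omega
      exact Subtype.ext (ZMod.val_injective n this)
    · intro u v h
      have hadj : (cycleCube n).Adj u.1 v.1 := h
      have hu := u.2
      have hv := v.2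
      simp only [hK, Set.mem_setOf_eq] at hu hv
      obtain ⟨c, hc1, hc3, hc⟩ := adj_val (by omega) hadj
      omega
  · have h1 := Set.ncard_add_ncard_compl K
    have h2 : K.ncard = 2*m := card_K n m hm hn
    have h3 : Nat.card (ZMod n) = n := Nat.card_zmod n
    omega

lemma lower (n m : ℕ) (hm : 1 ≤ m) (hn : n = 4*m+3) (K : Set (ZMod n))
    (hK : ((cycleCube n).induce K).IsAcyclic) : K.ncard ≤ 2*m := by
  haveI : NeZero n := ⟨by omega⟩
  classical
  by_contra hcon
  push_neg at hcon
  haveI : Fintype ↥K := (Set.toFinite K).fintype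
  set F : Finset (ZMod n) := K.toFinset with hF
  have hFK : ∀ v, v ∈ F ↔ v ∈ K := fun v => Set.mem_toFinset
  have hfcard : K.ncard = F.card := Set.ncard_eq_toFinset_card' K
  have hf : 2*m + 1 ≤ F.card := by omega
  have hne : ∃ w, w ∈ K := by
    obtain ⟨w, hw⟩ := Finset.card_pos.mp (by omega : 0 < F.card)
    exact ⟨w, (hFK w).mp hw⟩
  obtain ⟨w₀, hw₀⟩ := hne
  -- forward gap
  have hex : ∀ v : ZMod n, ∃ d, 0 < d ∧ v + (d : ℕ) ∈ K := by
    intro v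
    by_cases hv : v ∈ K
    · exact ⟨n, Nat.pos_of_ne_zero (NeZero.ne n), by simp [ZMod.natCast_self, hv]⟩
    · refine ⟨(w₀ - v).val, ?_, ?_⟩
      · have hnz : w₀ - v ≠ 0 := sub_ne_zero.mpr (fun h => hv (h ▸ hw₀))
        exact Nat.pos_of_ne_zero (fun h0 => hnz ((ZMod.val_eq_zero _).mp h0))
      · rw [ZMod.natCast_rightInverse (w₀ - v)]; simpa using hw₀
  set g : ZMod n → ℕ := fun v => Nat.find (hex v) with hg
  have hg1 : ∀ v, 0 < g v := fun v => (Nat.find_spec (hex v)).1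
  have hgK : ∀ v, v + (g v : ℕ) ∈ K := fun v => (Nat.find_spec (hex v)).2
  have hgmin : ∀ (v : ZMod n) (d : ℕ), 0 < d → v + (d : ℕ) ∈ K → g v ≤ d :=
    fun v d h1 h2 => Nat.find_min' (hex v) ⟨h1, h2⟩
  have hglt0 : True := trivial
  have hglt : ∀ v, g v < n := by
    intro v
    obtain ⟨w, hwF, hwne⟩ := Finset.exists_mem_ne (s := F) (by omega) v
    have h1 : w - v ≠ 0 := sub_ne_zero.mpr hwne
    have h2 : 0 < (w - v).val :=
      Nat.pos_of_ne_zero (fun h0 => h1 ((ZMod.val_eq_zero _).mp h0))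
    have h3 : v + ((w - v).val : ℕ) ∈ K := by
      rw [ZMod.natCast_rightInverse (w - v)]
      simpa using (hFK w).mp hwF
    exact lt_of_le_of_lt (hgmin v _ h2 h3) (ZMod.val_lt _)
  -- the sum of the gaps is n
  clear_value g
  -- backward: least e with x - e ∈ K
  have hex2 : ∀ x : ZMod n, ∃ e : ℕ, x - (e : ℕ) ∈ K := by
    intro x
    refine ⟨(x - w₀).val, ?_⟩
    rw [ZMod.natCast_rightInverse (x - w₀)]
    simpa using hw₀
  set e : ZMod n → ℕ := fun x => Nat.find (hex2 x) with he
  have heK : ∀ x, x - (e x : ℕ) ∈ K := fun x => Nat.find_spec (hex2 x)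
  have hemin : ∀ (x : ZMod n) (d : ℕ), x - (d : ℕ) ∈ K → e x ≤ d :=
    fun x d h2 => Nat.find_min' (hex2 x) h2
  clear_value e
  have hsum : ∑ v ∈ F, g v = n := by
    have hcard : (F.sigma fun v => Finset.range (g v)).card = Finset.univ.card (α := ZMod n) := by
      refine Finset.card_bij'
        (fun (p : (_ : ZMod n) × ℕ) (_ : p ∈ F.sigma fun v => Finset.range (g v)) =>
          p.1 + (p.2 : ℕ))
        (fun (x : ZMod n) (_ : x ∈ (Finset.univ : Finset (ZMod n))) =>
          (⟨x - (e x : ℕ), e x⟩ : (_ : ZMod n) × ℕ)) ?_ ?_ ?_ ?_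
      · intro p hp
        exact Finset.mem_univ _
      · intro x hx
        rw [Finset.mem_sigma]
        refine ⟨(hFK _).mpr (heK x), ?_⟩
        rw [Finset.mem_range]
        show e x < g (x - (e x : ℕ))
        by_contra hle
        push_neg at hle
        set v := x - (e x : ℕ) with hv
        have h1 : x - ((e x - g v : ℕ) : ZMod n) = v + (g v : ℕ) := by
          rw [Nat.cast_sub hle]
          rw [hv]
          ring
        have h2 : e x ≤ e x - g v := hemin x _ (by rw [h1]; exact hgK v)
        have := hg1 v
        omega
      · intro p hp
        rw [Finset.mem_sigma, Finset.mem_range] at hp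
        obtain ⟨hp1, hp2⟩ := hp
        have hej : e (p.1 + (p.2 : ℕ)) = p.2 := by
          have hle : e (p.1 + (p.2 : ℕ)) ≤ p.2 := by
            apply hemin
            rw [add_sub_cancel_right]
            exact (hFK _).mp hp1
          rcases Nat.lt_or_ge (e (p.1 + (p.2 : ℕ))) p.2 with hlt | hge
          · exfalso
            set q := e (p.1 + (p.2 : ℕ)) with hq
            have h1 : p.1 + ((p.2 - q : ℕ) : ZMod n) = (p.1 + (p.2 : ℕ)) - (q : ℕ) := by
              rw [Nat.cast_sub (le_of_lt hlt)]
              ring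
            have h2 : g p.1 ≤ p.2 - q := hgmin p.1 _ (by omega) (by rw [h1]; exact heK _)
            omega
          · omega
        have hv1 : (p.1 + (p.2 : ℕ)) - ((e (p.1 + (p.2 : ℕ)) : ℕ) : ZMod n) = p.1 := by
          rw [hej, add_sub_cancel_right]
        exact Sigma.ext hv1 (heq_of_eq hej)
      · intro x hx
        simp only [sub_add_cancel]
    calc ∑ v ∈ F, g v = ∑ v ∈ F, (Finset.range (g v)).card := by simp
      _ = (F.sigma fun v => Finset.range (g v)).card := (Finset.card_sigma _ _).symm
      _ = Finset.univ.card := hcard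
      _ = n := by rw [Finset.card_univ, ZMod.card]
  -- no triangle
  have htri : ∀ u v w : ZMod n, u ∈ K → v ∈ K → w ∈ K →
      (cycleCube n).Adj u v → (cycleCube n).Adj v w → (cycleCube n).Adj w u → False := by
    intro u v w hu hv hw h1 h2 h3
    exact not_isAcyclic_of_triangle
      (G := (cycleCube n).induce K) (u := ⟨u, hu⟩) (v := ⟨v, hv⟩) (w := ⟨w, hw⟩) h1 h2 h3 hK
  -- consecutive gaps sum to at least 4
  have hpair : ∀ v, v ∈ K → 4 ≤ g v + g (v + (g v : ℕ)) := by
    intro v hv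
    by_contra hlt
    push_neg at hlt
    set w := v + (g v : ℕ) with hw
    have hgv : 1 ≤ g v ∧ g v ≤ 2 := ⟨hg1 v, by have := hg1 w; omega⟩
    have hgw : 1 ≤ g w ∧ g w ≤ 2 := ⟨hg1 w, by have := hg1 v; omega⟩
    have a1 : (cycleCube n).Adj v w := adj_of_gap (by omega) v (g v) hgv.1 (by omega)
    have a2 : (cycleCube n).Adj w (w + (g w : ℕ)) := adj_of_gap (by omega) w (g w) hgw.1 (by omega)
    have hx : w + (g w : ℕ) = v + ((g v + g w : ℕ) : ZMod n) := by push_cast; ring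
    have a3 : (cycleCube n).Adj v (w + (g w : ℕ)) := by
      rw [hx]; exact adj_of_gap (by omega) v (g v + g w) (by omega) (by omega)
    exact htri v w (w + (g w : ℕ)) hv (hgK v) (hgK w) a1 a2 a3.symm
  -- injectivity of v ↦ v + g v
  have hinj : ∀ v ∈ F, ∀ v' ∈ F, v + (g v : ℕ) = v' + (g v' : ℕ) → v = v' := by
    have key : ∀ v ∈ F, ∀ v' ∈ F, g v < g v' → v + (g v : ℕ) = v' + (g v' : ℕ) → False := by
      intro v hv v' hv' hlt heq
      have h1 : v' + ((g v' - g v : ℕ) : ZMod n) = v := by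
        rw [Nat.cast_sub (le_of_lt hlt)]
        linear_combination -heq
      have h2 : g v' ≤ g v' - g v := hgmin v' _ (by omega) (by rw [h1]; exact (hFK v).mp hv)
      have := hg1 v
      omega
    intro v hv v' hv' heq
    rcases Nat.lt_trichotomy (g v) (g v') with h | h | h
    · exact absurd heq (fun he => key v hv v' hv' h he)
    · have : v + (g v : ℕ) = v' + (g v : ℕ) := by rw [heq, h]
      exact add_right_cancel (by rwa [add_comm v, add_comm v'] at this)
    · exact absurd heq (fun he => key v' hv' v hv h he.symm)
  -- the four gap classes
  set A : Finset (ZMod n) := F.filter (fun v => g v = 1) with hA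
  set B : Finset (ZMod n) := F.filter (fun v => g v = 2) with hB
  set C : Finset (ZMod n) := F.filter (fun v => g v = 3) with hC
  set D : Finset (ZMod n) := F.filter (fun v => 4 ≤ g v) with hD
  clear_value A B C D
  have hAF : ∀ x ∈ A, x ∈ F := fun x hx => by
    rw [hA] at hx; exact Finset.mem_of_mem_filter x hx
  have hpartcard : A.card + B.card + C.card + D.card = F.card := by
    rw [hA, hB, hC, hD]
    rw [Finset.card_filter, Finset.card_filter, Finset.card_filter, Finset.card_filter]
    rw [← Finset.sum_add_distrib, ← Finset.sum_add_distrib, ← Finset.sum_add_distrib]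
    rw [Finset.card_eq_sum_ones F]
    apply Finset.sum_congr rfl
    intro v hv
    have := hg1 v
    split_ifs <;> omega
  have hsplit' : A.card + 2*B.card + 3*C.card + (∑ v ∈ D, g v) = ∑ v ∈ F, g v := by
    rw [hA, hB, hC]
    rw [Finset.card_filter, Finset.card_filter, Finset.card_filter]
    rw [hD, Finset.sum_filter]
    rw [Finset.mul_sum, Finset.mul_sum]
    rw [← Finset.sum_add_distrib, ← Finset.sum_add_distrib, ← Finset.sum_add_distrib]
    apply Finset.sum_congr rfl
    intro v hv
    have := hg1 v
    split_ifs <;> omega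
  have hsplit : A.card + 2*B.card + 3*C.card + (∑ v ∈ D, g v) = n := hsplit'.trans hsum
  have hsD : 4*D.card ≤ ∑ v ∈ D, g v := by
    calc 4*D.card = D.card * 4 := by ring
    _ = ∑ _v ∈ D, 4 := by rw [Finset.sum_const, smul_eq_mul]
    _ ≤ ∑ v ∈ D, g v := Finset.sum_le_sum (fun v hv => by
          rw [hD, Finset.mem_filter] at hv; exact hv.2)
  -- A injects into C ∪ D
  have hnextCD : ∀ v ∈ A, v + (g v : ℕ) ∈ C ∪ D := by
    intro v hv
    rw [hA, Finset.mem_filter] at hv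
    have h4 := hpair v ((hFK v).mp hv.1)
    have h3 : 3 ≤ g (v + (g v : ℕ)) := by omega
    have hmem : v + (g v : ℕ) ∈ F := (hFK _).mpr (hgK v)
    rw [Finset.mem_union, hC, hD, Finset.mem_filter, Finset.mem_filter]
    rcases Nat.lt_or_ge (g (v + (g v : ℕ))) 4 with h | h
    · exact Or.inl ⟨hmem, by omega⟩
    · exact Or.inr ⟨hmem, h⟩
  have hAC : A.card ≤ C.card + D.card := by
    have h1 : A.card ≤ (C ∪ D).card := by
      apply Finset.card_le_card_of_injOn (fun v => v + (g v : ℕ)) hnextCD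
      intro x hx y hy hxy
      exact hinj x (hAF x hx) y (hAF y hy) hxy
    exact h1.trans (Finset.card_union_le C D)
  -- deduce f = 2m+1, D.card ≤ 1
  have hfeq : F.card = 2*m + 1 := by omega
  have hd1 : D.card ≤ 1 := by omega
  rcases Nat.eq_zero_or_pos D.card with hd0 | hdpos
  · -- case D empty : induced graph is connected with ≥ f edges, a tree: contradiction
    have hg3 : ∀ v ∈ F, g v ≤ 3 := by
      intro v hv
      by_contra hlt
      have : v ∈ D := by rw [hD, Finset.mem_filter]; exact ⟨hv, by omega⟩
      rw [Finset.card_eq_zero.mp hd0] at this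
      exact absurd this (Finset.notMem_empty v)
    -- reachability to w₀
    have reach : ∀ N : ℕ, ∀ x : ZMod n, ∀ hx : x ∈ K, (x - w₀).val ≤ N →
        ((cycleCube n).induce K).Reachable ⟨x, hx⟩ ⟨w₀, hw₀⟩ := by
      intro N
      induction N with
      | zero =>
        intro x hx hval
        have : x - w₀ = 0 := by
          rw [← ZMod.val_eq_zero]; omega
        have hxw : x = w₀ := sub_eq_zero.mp this
        have heq : (⟨x, hx⟩ : ↥K) = ⟨w₀, hw₀⟩ := Subtype.ext hxw
        rw [heq]
      | succ N ih =>
        intro x hx hval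
        by_cases hxw : x = w₀
        · have : (⟨x, hx⟩ : ↥K) = ⟨w₀, hw₀⟩ := Subtype.ext hxw
          rw [this]
        · have hk0 : 0 < (x - w₀).val :=
            Nat.pos_of_ne_zero (fun h0 => hxw (sub_eq_zero.mp ((ZMod.val_eq_zero _).mp h0)))
          set k := (x - w₀).val with hkk
          have hkK : x - (k : ℕ) ∈ K := by
            rw [ZMod.natCast_rightInverse (x - w₀), sub_sub_cancel]
            exact hw₀
          have hP : ∃ d, 0 < d ∧ x - (d : ℕ) ∈ K :=
            ⟨n, Nat.pos_of_ne_zero (NeZero.ne n), by simpa [ZMod.natCast_self] using hx⟩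
          set q := Nat.find hP with hq
          obtain ⟨hq0, huK⟩ := Nat.find_spec hP
          have hqk : q ≤ k := Nat.find_min' hP ⟨hk0, hkK⟩
          set u := x - (q : ℕ) with hu
          have hux : u + (q : ℕ) = x := by rw [hu]; ring
          have hgu : g u = q := by
            have hle : g u ≤ q := hgmin u q hq0 (by rw [hux]; exact hx)
            rcases Nat.lt_or_ge (g u) q with hlt | hge
            · exfalso
              have h1 : x - ((q - g u : ℕ) : ZMod n) = u + (g u : ℕ) := by
                rw [Nat.cast_sub (le_of_lt hlt), hu]; ring
              have h2 : q ≤ q - g u := Nat.find_min' hP ⟨by omega, by rw [h1]; exact hgK u⟩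
              have := hg1 u
              omega
            · omega
          have huF : u ∈ F := (hFK u).mpr huK
          have hadj : (cycleCube n).Adj u x := by
            have h := adj_of_gap (n := n) (by omega) u (g u) (hg1 u) (hg3 u huF)
            rwa [hgu, hux] at h
          have hvalu : (u - w₀).val ≤ N := by
            have h5 : u - w₀ = ((k - q : ℕ) : ZMod n) := by
              rw [Nat.cast_sub hqk, ZMod.natCast_rightInverse (x - w₀), hu]
              ring
            rw [h5, ZMod.val_cast_of_lt (by have := ZMod.val_lt (x - w₀); omega)]
            omega
          have hadj' : ((cycleCube n).induce K).Adj ⟨x, hx⟩ ⟨u, huK⟩ := hadj.symm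
          exact hadj'.reachable.trans (ih u huK hvalu)
    haveI : Nonempty ↥K := ⟨⟨w₀, hw₀⟩⟩
    have hconn : ((cycleCube n).induce K).Connected := by
      constructor
      intro p q
      exact (reach _ p.1 p.2 le_rfl).trans (reach _ q.1 q.2 le_rfl).symm
    have htree : ((cycleCube n).induce K).IsTree := ⟨hconn, hK⟩
    haveI : Fintype ((cycleCube n).induce K).edgeSet := Fintype.ofFinite _
    have hedgecard := htree.card_edgeFinset
    have hcardK : Fintype.card ↥K = F.card := (Set.toFinset_card K).symm
    have hle : F.card ≤ ((cycleCube n).induce K).edgeFinset.card := by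
      rw [← Finset.card_attach (s := F)]
      apply Finset.card_le_card_of_injOn
        (fun v : {z // z ∈ F} => s(⟨v.1, (hFK v.1).mp v.2⟩, (⟨v.1 + (g v.1 : ℕ), hgK v.1⟩ : ↥K)))
      · intro v hv
        rw [Finset.mem_coe, SimpleGraph.mem_edgeFinset]
        have hadj : (cycleCube n).Adj v.1 (v.1 + (g v.1 : ℕ)) :=
          adj_of_gap (by omega) v.1 (g v.1) (hg1 v.1) (hg3 v.1 v.2)
        exact hadj
      · intro x hx y hy hxy
        rcases Sym2.eq_iff.mp hxy with ⟨h1, h2⟩ | ⟨h1, h2⟩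
        · exact Subtype.ext (congrArg (Subtype.val : ↥K → ZMod n) h1)
        · exfalso
          have e1 : (x.1 : ZMod n) = y.1 + (g y.1 : ℕ) := congrArg (Subtype.val : ↥K → ZMod n) h1
          have e2 : (x.1 : ZMod n) + (g x.1 : ℕ) = y.1 := congrArg (Subtype.val : ↥K → ZMod n) h2
          have e3 : y.1 + ((g y.1 + g x.1 : ℕ) : ZMod n) = y.1 := by
            calc y.1 + ((g y.1 + g x.1 : ℕ) : ZMod n)
                = (y.1 + (g y.1 : ℕ)) + (g x.1 : ℕ) := by push_cast; ring
              _ = x.1 + (g x.1 : ℕ) := by rw [← e1]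
              _ = y.1 := e2
          have hdvd : n ∣ (g y.1 + g x.1) :=
            (ZMod.natCast_eq_zero_iff _ _).mp (by
              have := add_eq_left.mp e3
              exact this)
          have hnle := Nat.le_of_dvd (by have := hg1 x.1; omega) hdvd
          have := hg3 x.1 x.2
          have := hg3 y.1 y.2
          omega
    omega
  · -- case D is a single vertex with gap exactly 4
    have hdisjCD : Disjoint C D := by
      rw [Finset.disjoint_left]
      intro v hvC hvD
      rw [hC, Finset.mem_filter] at hvC
      rw [hD, Finset.mem_filter] at hvD
      omega
    have hcardCD : (C ∪ D).card = C.card + D.card := Finset.card_union_of_disjoint hdisjCD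
    have haCD : A.card = (C ∪ D).card := by
      have h1 : A.card = C.card + 1 := by omega
      omega
    have himg : A.image (fun v => v + (g v : ℕ)) = C ∪ D := by
      apply Finset.eq_of_subset_of_card_le
      · intro x hx
        obtain ⟨v, hv, rfl⟩ := Finset.mem_image.mp hx
        exact hnextCD v hv
      · rw [Finset.card_image_of_injOn (fun x hx y hy hxy =>
          hinj x (hAF x hx) y (hAF y hy) hxy)]
        omega
    have hBB : ∀ v ∈ B, v + (g v : ℕ) ∈ B := by
      intro v hv
      rw [hB, Finset.mem_filter] at hv
      have hmemF : v + (g v : ℕ) ∈ F := (hFK _).mpr (hgK v)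
      have h4 := hpair v ((hFK v).mp hv.1)
      have h2 : 2 ≤ g (v + (g v : ℕ)) := by omega
      have hnotCD : v + (g v : ℕ) ∉ C ∪ D := by
        intro hmem
        rw [← himg] at hmem
        obtain ⟨u, hu, huv⟩ := Finset.mem_image.mp hmem
        have : u = v := hinj u (hAF u hu) v hv.1 huv
        rw [hA, Finset.mem_filter] at hu
        rw [this] at hu
        omega
      rw [hB, Finset.mem_filter]
      refine ⟨hmemF, ?_⟩
      by_contra hne2
      apply hnotCD
      rw [Finset.mem_union, hC, hD, Finset.mem_filter, Finset.mem_filter]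
      rcases Nat.lt_or_ge (g (v + (g v : ℕ))) 4 with h | h
      · exact Or.inl ⟨hmemF, by omega⟩
      · exact Or.inr ⟨hmemF, h⟩
    have hbpos : 0 < B.card := by omega
    obtain ⟨vB, hvB⟩ := Finset.card_pos.mp hbpos
    have hiter : ∀ k : ℕ, vB + ((2*k : ℕ) : ZMod n) ∈ B := by
      intro k
      induction k with
      | zero => simpa using hvB
      | succ k ih =>
        have hg2 : g (vB + ((2*k : ℕ) : ZMod n)) = 2 := by
          have h := ih; rw [hB, Finset.mem_filter] at h; exact h.2
        have := hBB _ ih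
        rw [hg2] at this
        have heq : vB + ((2*k : ℕ) : ZMod n) + ((2 : ℕ) : ZMod n)
            = vB + ((2*(k+1) : ℕ) : ZMod n) := by push_cast; ring
        rwa [heq] at this
    have hall : ∀ x : ZMod n, x ∈ B := by
      intro x
      have h1 : (2 * ((x - vB).val * (2*m+2)) : ℕ) = (x - vB).val * (4*m+4) := by ring
      have h2 : ((2 * ((x - vB).val * (2*m+2)) : ℕ) : ZMod n) = x - vB := by
        rw [h1, Nat.cast_mul, ZMod.natCast_rightInverse (x - vB)]
        rw [show (4*m+4 : ℕ) = n + 1 by omega]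
        push_cast [ZMod.natCast_self]
        ring
      have h3 := hiter ((x - vB).val * (2*m+2))
      rw [h2] at h3
      rwa [add_sub_cancel] at h3
    have huniv : Finset.univ ⊆ B := fun x _ => hall x
    have hcardB : (Finset.univ : Finset (ZMod n)).card ≤ B.card := Finset.card_le_card huniv
    rw [Finset.card_univ, ZMod.card] at hcardB
    have hBF : B.card ≤ F.card := by
      rw [hB]; exact Finset.card_le_card (Finset.filter_subset _ _)
    omega

/-- For every `n ≥ 7` with `n ≡ 3 (mod 4)`, `∇(Cₙ³) = (n+3)/2`. -/
theorem decyclingNumber_cycleCube_three_mod_four (n : ℕ) (hn : 7 ≤ n) (h4 : n % 4 = 3) :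
    (cycleCube n).decyclingNumber = (n + 3) / 2 := by
  obtain ⟨m, hm, hnm⟩ : ∃ m, 1 ≤ m ∧ n = 4*m+3 := ⟨n/4, by omega, by omega⟩
  have hgoal : (n + 3) / 2 = 2*m + 3 := by omega
  rw [hgoal]
  obtain ⟨S, hS, hScard⟩ := upper n m hm hnm
  unfold SimpleGraph.decyclingNumber
  apply le_antisymm
  · exact Nat.sInf_le (show (2*m+3) ∈ {k | ∃ S : Set (ZMod n),
      (cycleCube n).IsDecyclingSet S ∧ S.ncard = k} from ⟨S, hS, hScard⟩)
  · apply le_csInf ⟨2*m+3, show (2*m+3) ∈ {k | ∃ S : Set (ZMod n),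
      (cycleCube n).IsDecyclingSet S ∧ S.ncard = k} from ⟨S, hS, hScard⟩⟩
    rintro k ⟨T, hT, rfl⟩
    haveI : NeZero n := ⟨by omega⟩
    have hl : Tᶜ.ncard ≤ 2*m := lower n m hm hnm Tᶜ hT
    have hc := Set.ncard_add_ncard_compl T
    rw [Nat.card_zmod] at hc
    omega
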